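/- Let P be an n×n complex matrix with P² = I, let A, B, X, Y be n×n complex matrices, and define U(θ) = exp(−i(θ/2)·P). Then there exist complex coefficients β_{-2}, β_{-1}, β_0, β_1, β_2 (independent of θ) such that for all θ ∈ ℝ, tr(A · U(θ) X U(θ)⁻¹ · B · U(θ) Y U(θ)⁻¹) = ∑_{k=-2}^{2} β_k · e^{ikθ}. -/

import Mathlib

open Complex

lemma exp_smul_of_sq_eq_one {n : ℕ} (P : Matrix (Fin n) (Fin n) ℂ) (hP : P ^ 2 = 1) (z : ℂ) :
    NormedSpace.exp (z • P) =
      Complex.exp z • ((2⁻¹ : ℂ) • (1 + P)) + Complex.exp (-z) • ((2⁻¹ : ℂ) • (1 - P)) := by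
  set Ep : Matrix (Fin n) (Fin n) ℂ := (2⁻¹ : ℂ) • (1 + P) with hEp
  set Em : Matrix (Fin n) (Fin n) ℂ := (2⁻¹ : ℂ) • (1 - P) with hEm
  have hpow : ∀ m : ℕ, P ^ m = Ep + ((-1 : ℂ) ^ m) • Em := by
    intro m
    induction m with
    | zero => rw [pow_zero, pow_zero, one_smul, hEp, hEm]; module
    | succ m ih =>
      have hEpP : Ep * P = Ep := by
        simp only [hEp, Matrix.smul_mul, Matrix.add_mul, Matrix.one_mul, ← pow_two, hP]
        module
      have hEmP : Em * P = -Em := by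
        simp only [hEm, Matrix.smul_mul, Matrix.sub_mul, Matrix.one_mul, ← pow_two, hP]
        module
      rw [pow_succ, ih, Matrix.add_mul, hEpP, Matrix.smul_mul, hEmP, pow_succ]
      module
  have hsummul : ∀ w : ℂ, Summable fun m : ℕ => ((Nat.factorial m : ℂ))⁻¹ * w ^ m := by
    intro w
    simpa [smul_eq_mul] using NormedSpace.expSeries_summable' (𝕂 := ℂ) w
  have hsum1 : Summable fun m : ℕ => (((Nat.factorial m : ℂ))⁻¹ * z ^ m) • Ep := (hsummul z).smul_const Ep
  have hsum2 : Summable fun m : ℕ => (((Nat.factorial m : ℂ))⁻¹ * (-z) ^ m) • Em := (hsummul (-z)).smul_const Em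
  have hterm : ∀ m : ℕ, ((Nat.factorial m : ℂ))⁻¹ • (z • P) ^ m =
      (((Nat.factorial m : ℂ))⁻¹ * z ^ m) • Ep + (((Nat.factorial m : ℂ))⁻¹ * (-z) ^ m) • Em := by
    intro m
    rw [smul_pow, hpow m, neg_pow]
    module
  have hexp : ∀ w : ℂ, (∑' m : ℕ, (((Nat.factorial m : ℂ))⁻¹ * w ^ m)) = Complex.exp w := by
    intro w
    rw [Complex.exp_eq_exp_ℂ, NormedSpace.exp_eq_tsum (𝕂 := ℂ)]
    simp [smul_eq_mul]
  rw [NormedSpace.exp_eq_tsum (𝕂 := ℂ)]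
  calc (∑' m : ℕ, ((Nat.factorial m : ℂ))⁻¹ • (z • P) ^ m)
      = ∑' m : ℕ, ((((Nat.factorial m : ℂ))⁻¹ * z ^ m) • Ep + (((Nat.factorial m : ℂ))⁻¹ * (-z) ^ m) • Em) :=
        tsum_congr hterm
    _ = (∑' m : ℕ, (((Nat.factorial m : ℂ))⁻¹ * z ^ m)) • Ep + (∑' m : ℕ, (((Nat.factorial m : ℂ))⁻¹ * (-z) ^ m)) • Em := by
        rw [Summable.tsum_add hsum1 hsum2, Summable.tsum_smul_const (hsummul z), Summable.tsum_smul_const (hsummul (-z))]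
    _ = Complex.exp z • Ep + Complex.exp (-z) • Em := by rw [hexp, hexp]

theorem pauli_rotation_quadratic_trace_trig
    (n : ℕ) (P A B X Y : Matrix (Fin n) (Fin n) ℂ) (hP : P ^ 2 = 1)
    (U : ℝ → Matrix (Fin n) (Fin n) ℂ)
    (hU : ∀ θ : ℝ, U θ = NormedSpace.exp ((-(Complex.I * (θ / 2 : ℂ))) • P)) :
    ∃ β : ℤ → ℂ, ∀ θ : ℝ,
      Matrix.trace (A * (U θ * X * (U θ)⁻¹) * B * (U θ * Y * (U θ)⁻¹)) =
        ∑ k ∈ Finset.Icc (-2 : ℤ) 2, β k * Complex.exp (Complex.I * (k : ℂ) * (θ : ℂ)) := by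
  have hP' : P * P = 1 := by rw [← pow_two]; exact hP
  set Ep : Matrix (Fin n) (Fin n) ℂ := (2⁻¹ : ℂ) • (1 + P) with hEp
  set Em : Matrix (Fin n) (Fin n) ℂ := (2⁻¹ : ℂ) • (1 - P) with hEm
  have hpp : Ep * Ep = Ep := by
    simp only [hEp, Matrix.smul_mul, Matrix.mul_smul, Matrix.add_mul, Matrix.mul_add,
      Matrix.one_mul, Matrix.mul_one, hP']
    module
  have hmm : Em * Em = Em := by
    simp only [hEm, Matrix.smul_mul, Matrix.mul_smul, Matrix.sub_mul, Matrix.mul_sub,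
      Matrix.one_mul, Matrix.mul_one, hP']
    module
  have hpm : Ep * Em = 0 := by
    simp only [hEp, hEm, Matrix.smul_mul, Matrix.mul_smul, Matrix.add_mul, Matrix.mul_add,
      Matrix.sub_mul, Matrix.mul_sub, Matrix.one_mul, Matrix.mul_one, hP']
    module
  have hmp : Em * Ep = 0 := by
    simp only [hEp, hEm, Matrix.smul_mul, Matrix.mul_smul, Matrix.add_mul, Matrix.mul_add,
      Matrix.sub_mul, Matrix.mul_sub, Matrix.one_mul, Matrix.mul_one, hP']
    module
  set X0 : Matrix (Fin n) (Fin n) ℂ := Ep * X * Ep + Em * X * Em with hX0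
  set Xm : Matrix (Fin n) (Fin n) ℂ := Ep * X * Em with hXm
  set Xp : Matrix (Fin n) (Fin n) ℂ := Em * X * Ep with hXp
  set Y0 : Matrix (Fin n) (Fin n) ℂ := Ep * Y * Ep + Em * Y * Em with hY0
  set Ym : Matrix (Fin n) (Fin n) ℂ := Ep * Y * Em with hYm
  set Yp : Matrix (Fin n) (Fin n) ℂ := Em * Y * Ep with hYp
  refine ⟨fun m =>
    if m = -2 then Matrix.trace (A * Xm * B * Ym)
    else if m = -1 then Matrix.trace (A * X0 * B * Ym) + Matrix.trace (A * Xm * B * Y0)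
    else if m = 0 then Matrix.trace (A * X0 * B * Y0) + Matrix.trace (A * Xm * B * Yp)
      + Matrix.trace (A * Xp * B * Ym)
    else if m = 1 then Matrix.trace (A * X0 * B * Yp) + Matrix.trace (A * Xp * B * Y0)
    else if m = 2 then Matrix.trace (A * Xp * B * Yp)
    else 0, fun θ => ?_⟩
  set a : ℂ := Complex.exp (-(Complex.I * (θ / 2 : ℂ))) with ha
  set b : ℂ := Complex.exp (Complex.I * (θ / 2 : ℂ)) with hb
  have ha0 : a ≠ 0 := Complex.exp_ne_zero _
  have hab : a * b = 1 := by
    rw [ha, hb, ← Complex.exp_add, neg_add_cancel, Complex.exp_zero]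
  have hbinv : b = a⁻¹ := by field_simp [← hab]; rw [mul_comm]; exact hab
  have hUθ : U θ = a • Ep + b • Em := by
    rw [hU θ, exp_smul_of_sq_eq_one P hP, neg_neg, ← ha, ← hb, ← hEp, ← hEm]
  have hV : (U θ)⁻¹ = b • Ep + a • Em := by
    apply Matrix.inv_eq_right_inv
    rw [hUθ]
    simp only [Matrix.add_mul, Matrix.mul_add, Matrix.smul_mul, Matrix.mul_smul,
      hpp, hmm, hpm, hmp, smul_smul, smul_zero, add_zero, zero_add]
    rw [mul_comm b a, hab, one_smul, one_smul, hEp, hEm]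
    module
  have hX : U θ * X * (U θ)⁻¹ = X0 + (a * a) • Xm + (b * b) • Xp := by
    rw [hV, hUθ, Matrix.mul_assoc]
    simp only [Matrix.add_mul, Matrix.mul_add, Matrix.smul_mul, Matrix.mul_smul,
      smul_smul, smul_add, ← Matrix.mul_assoc]
    simp only [mul_comm b a, hab, one_smul]
    rw [hX0, hXm, hXp]
    abel
  have hY : U θ * Y * (U θ)⁻¹ = Y0 + (a * a) • Ym + (b * b) • Yp := by
    rw [hV, hUθ, Matrix.mul_assoc]
    simp only [Matrix.add_mul, Matrix.mul_add, Matrix.smul_mul, Matrix.mul_smul,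
      smul_smul, smul_add, ← Matrix.mul_assoc]
    simp only [mul_comm b a, hab, one_smul]
    rw [hY0, hYm, hYp]
    abel
  have h1m : Complex.exp (-(Complex.I * (θ : ℂ))) = a * a := by
    rw [ha, ← Complex.exp_add]
    congr 1
    ring
  have h1p : Complex.exp (Complex.I * (θ : ℂ)) = b * b := by
    rw [hb, ← Complex.exp_add]
    congr 1
    ring
  have h2m : Complex.exp (-(Complex.I * 2 * (θ : ℂ))) = a * a * (a * a) := by
    rw [← h1m, ← Complex.exp_add]
    congr 1
    ring
  have h2p : Complex.exp (Complex.I * 2 * (θ : ℂ)) = b * b * (b * b) := by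
    rw [← h1p, ← Complex.exp_add]
    congr 1
    ring
  have hIcc : Finset.Icc (-2 : ℤ) 2 = {-2, -1, 0, 1, 2} := rfl
  rw [hX, hY, hIcc]
  rw [Finset.sum_insert (by decide), Finset.sum_insert (by decide),
    Finset.sum_insert (by decide), Finset.sum_insert (by decide), Finset.sum_singleton]
  norm_num
  rw [h1m, h1p, h2m, h2p]
  simp only [Matrix.mul_add, Matrix.add_mul, Matrix.mul_smul, Matrix.smul_mul,
    Matrix.trace_add, Matrix.trace_smul, smul_eq_mul, smul_smul]
  simp only [hbinv]
  field_simp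
  ring
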